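/- Let (𝔰, μ) be a finite-dimensional solvable real Lie algebra with nilradical 𝔫. Then for every X ∈ 𝔰 and Y ∈ 𝔫, the endomorphisms ad_μ(X + Y) and ad_μ(X) of 𝔰 have the same spectrum (i.e., the same set of complex eigenvalues of their complexifications). -/

import Mathlib

open TensorProduct

section Aux

variable {L : Type*} [LieRing L] [LieAlgebra ℝ L]

/-- Auxiliary filtration: `lieFilt N 0 = ⊤`, `lieFilt N (k+1) = span ⁅N, lieFilt N k⁆`. -/
def lieFilt (N : LieIdeal ℝ L) : ℕ → Submodule ℝ L
  | 0 => ⊤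
  | (k+1) => Submodule.span ℝ {z | ∃ n ∈ N, ∃ w ∈ lieFilt N k, z = ⁅n, w⁆}

lemma lieFilt_lie_mem (N : LieIdeal ℝ L) (x : L) :
    ∀ k, ∀ z ∈ lieFilt N k, ⁅x, z⁆ ∈ lieFilt N k := by
  intro k
  induction k with
  | zero => intro z _; trivial
  | succ k ih =>
    intro z hz
    induction hz using Submodule.span_induction with
    | mem z hzmem =>
      obtain ⟨n, hn, w, hw, rfl⟩ := hzmem
      rw [leibniz_lie]
      refine Submodule.add_mem _ ?_ ?_
      · exact Submodule.subset_span ⟨⁅x, n⁆, N.lie_mem hn, w, hw, rfl⟩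
      · exact Submodule.subset_span ⟨n, hn, ⁅x, w⁆, ih w hw, rfl⟩
    | zero => rw [lie_zero]; exact Submodule.zero_mem _
    | add a b _ _ ha hb => rw [lie_add]; exact Submodule.add_mem _ ha hb
    | smul r a _ ha => rw [lie_smul]; exact Submodule.smul_mem _ r ha

lemma lieFilt_lie_mem_succ (N : LieIdeal ℝ L) {Y : L} (hY : Y ∈ N) :
    ∀ k, ∀ z ∈ lieFilt N k, ⁅Y, z⁆ ∈ lieFilt N (k + 1) := by
  intro k z hz
  exact Submodule.subset_span ⟨Y, hY, z, hz, rfl⟩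

lemma lieFilt_le (N : LieIdeal ℝ L) :
    ∀ j, lieFilt N (j + 1) ≤
      (LieSubmodule.toSubmodule (LieModule.lowerCentralSeries ℝ ↥N ↥N j)).map
        ((N : LieSubmodule ℝ L L).incl : ↥N →ₗ[ℝ] L) := by
  intro j
  induction j with
  | zero =>
    refine Submodule.span_le.mpr ?_
    rintro z ⟨n, hn, w, _, rfl⟩
    have hmem : ⁅n, w⁆ ∈ N := by
      have : ⁅n, w⁆ = -⁅w, n⁆ := by rw [← lie_skew]
      rw [this]; exact Submodule.neg_mem _ (N.lie_mem hn)
    exact ⟨⟨⁅n, w⁆, hmem⟩, by simp, rfl⟩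
  | succ j ih =>
    refine Submodule.span_le.mpr ?_
    rintro z ⟨n, hn, w, hw, rfl⟩
    obtain ⟨v, hv, rfl⟩ := ih hw
    refine ⟨⁅(⟨n, hn⟩ : ↥N), v⁆, ?_, ?_⟩
    · rw [LieModule.lowerCentralSeries_succ]
      exact LieSubmodule.lie_mem_lie (LieSubmodule.mem_top _) hv
    · rfl

/-- Membership transfer for base change of linear maps. -/
lemma baseChange_mem_of_mem {p q : Submodule ℝ L} {f : L →ₗ[ℝ] L}
    (h : ∀ x ∈ p, f x ∈ q) :
    ∀ v ∈ p.baseChange ℂ, f.baseChange ℂ v ∈ q.baseChange ℂ := by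
  intro v hv
  rw [Submodule.baseChange_eq_span] at hv
  induction hv using Submodule.span_induction with
  | mem z hzmem =>
    obtain ⟨x, hx, rfl⟩ := hzmem
    simpa using Submodule.tmul_mem_baseChange_of_mem (1 : ℂ) (h x hx)
  | zero => simp
  | add a b _ _ ha hb => rw [map_add]; exact Submodule.add_mem _ ha hb
  | smul r a _ ha => rw [map_smul]; exact Submodule.smul_mem _ r ha

end Aux

/-- Injectivity transfer along a filtration. -/
lemma injective_of_filtration {V : Type*} [AddCommGroup V] [Module ℂ V]
    [FiniteDimensional ℂ V] (f g : V →ₗ[ℂ] V) (C : ℕ → Submodule ℂ V) (m : ℕ)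
    (hC0 : C 0 = ⊤) (hCm : C m = ⊥)
    (hf : ∀ k, ∀ v ∈ C k, f v ∈ C k)
    (hd : ∀ k, ∀ v ∈ C k, f v - g v ∈ C (k + 1))
    (hinj : Function.Injective f) : Function.Injective g := by
  -- preimage of the filtration under `f` stays in the filtration
  have hpre : ∀ k, ∀ v : V, f v ∈ C k → v ∈ C k := by
    intro k v hv
    have hfr : Function.Injective (f.restrict (hf k)) := by
      intro a b hab
      have := congrArg (Subtype.val) hab
      exact Subtype.ext (hinj this)
    have hsurj : Function.Surjective (f.restrict (hf k)) :=
      (LinearMap.injective_iff_surjective).mp hfr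
    obtain ⟨w, hw⟩ := hsurj ⟨f v, hv⟩
    have : f (w : V) = f v := congrArg Subtype.val hw
    have : (w : V) = v := hinj this
    exact this ▸ w.2
  rw [injective_iff_map_eq_zero]
  intro v hv
  have hmem : ∀ k, v ∈ C k := by
    intro k
    induction k with
    | zero => rw [hC0]; trivial
    | succ k ih =>
      have h1 : f v - g v ∈ C (k + 1) := hd k v ih
      rw [hv, sub_zero] at h1
      exact hpre (k + 1) v h1
  have := hmem m
  rw [hCm] at this
  simpa using this

theorem stmt1 (L : Type*) [LieRing L] [LieAlgebra ℝ L] [Module.Finite ℝ L]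
    [LieAlgebra.IsSolvable L]
    (𝔫 : LieIdeal ℝ L) (hnil : LieRing.IsNilpotent ↥𝔫)
    (hmax : ∀ I : LieIdeal ℝ L, LieRing.IsNilpotent ↥I → I ≤ 𝔫)
    (X Y : L) (hY : Y ∈ 𝔫) :
    spectrum ℂ (((LieAlgebra.ad ℝ L (X + Y)) : L →ₗ[ℝ] L).baseChange ℂ) =
      spectrum ℂ (((LieAlgebra.ad ℝ L X) : L →ₗ[ℝ] L).baseChange ℂ) := by
  classical
  -- the filtration terminates
  obtain ⟨k, hk⟩ := (LieModule.isNilpotent_iff ℝ (L := ↥𝔫) (M := ↥𝔫)).mp hnil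
  have hbot : lieFilt 𝔫 (k + 1) = ⊥ := by
    have := lieFilt_le 𝔫 k
    rw [hk] at this
    simpa using le_bot_iff.mp (by simpa using this)
  -- base-changed filtration
  set C : ℕ → Submodule ℂ (ℂ ⊗[ℝ] L) := fun j => (lieFilt 𝔫 j).baseChange ℂ with hC
  have hC0 : C 0 = ⊤ := by
    show (lieFilt 𝔫 0).baseChange ℂ = ⊤
    simp [lieFilt]
  have hCm : C (k + 1) = ⊥ := by
    show (lieFilt 𝔫 (k + 1)).baseChange ℂ = ⊥
    rw [hbot]; simp
  set f := ((LieAlgebra.ad ℝ L (X + Y)) : L →ₗ[ℝ] L).baseChange ℂ with hf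
  set g := ((LieAlgebra.ad ℝ L X) : L →ₗ[ℝ] L).baseChange ℂ with hg
  have hfC : ∀ j, ∀ v ∈ C j, f v ∈ C j := fun j =>
    baseChange_mem_of_mem (fun x hx => lieFilt_lie_mem 𝔫 (X + Y) j x hx)
  have hgC : ∀ j, ∀ v ∈ C j, g v ∈ C j := fun j =>
    baseChange_mem_of_mem (fun x hx => lieFilt_lie_mem 𝔫 X j x hx)
  have hdiff : ∀ j, ∀ v ∈ C j, f v - g v ∈ C (j + 1) := by
    intro j v hv
    have hsub : f - g = ((LieAlgebra.ad ℝ L Y : L →ₗ[ℝ] L)).baseChange ℂ := by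
      rw [hf, hg, ← LinearMap.baseChange_sub]
      congr 1
      ext z
      simp [LieAlgebra.ad_apply, add_lie]
    have := baseChange_mem_of_mem (f := (LieAlgebra.ad ℝ L Y : L →ₗ[ℝ] L))
      (fun x hx => lieFilt_lie_mem_succ 𝔫 hY j x hx) v hv
    rw [← hsub] at this
    simpa using this
  -- now compare spectra
  ext a
  have key : ∀ (p q : (ℂ ⊗[ℝ] L) →ₗ[ℂ] (ℂ ⊗[ℝ] L)),
      (∀ j, ∀ v ∈ C j, p v ∈ C j) → (∀ j, ∀ v ∈ C j, p v - q v ∈ C (j + 1)) →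
      Function.Injective (algebraMap ℂ (Module.End ℂ (ℂ ⊗[ℝ] L)) a - p) →
      Function.Injective (algebraMap ℂ (Module.End ℂ (ℂ ⊗[ℝ] L)) a - q) := by
    intro p q hp hpq hi
    refine injective_of_filtration _ _ C (k + 1) hC0 hCm ?_ ?_ hi
    · intro j v hv
      have : (algebraMap ℂ (Module.End ℂ (ℂ ⊗[ℝ] L)) a - p) v = a • v - p v := by
        simp [Module.algebraMap_end_apply]
      rw [this]
      exact Submodule.sub_mem _ (Submodule.smul_mem _ _ hv) (hp j v hv)
    · intro j v hv
      have : (algebraMap ℂ (Module.End ℂ (ℂ ⊗[ℝ] L)) a - p) v -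
          (algebraMap ℂ (Module.End ℂ (ℂ ⊗[ℝ] L)) a - q) v = q v - p v := by
        simp
      rw [this]
      simpa [neg_sub] using Submodule.neg_mem _ (hpq j v hv)
  have hpq' : ∀ j, ∀ v ∈ C j, g v - f v ∈ C (j + 1) := by
    intro j v hv
    simpa [neg_sub] using Submodule.neg_mem _ (hdiff j v hv)
  simp only [spectrum.mem_iff, not_iff_not (a := ¬ _)]
  rw [not_iff_not]
  constructor
  · intro h
    rw [Module.End.isUnit_iff] at h ⊢
    have hi : Function.Injective (algebraMap ℂ (Module.End ℂ (ℂ ⊗[ℝ] L)) a - f) := h.injective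
    have := key f g hfC hdiff hi
    exact ⟨this, LinearMap.injective_iff_surjective.mp this⟩
  · intro h
    rw [Module.End.isUnit_iff] at h ⊢
    have hi : Function.Injective (algebraMap ℂ (Module.End ℂ (ℂ ⊗[ℝ] L)) a - g) := h.injective
    have := key g f hgC hpq' hi
    exact ⟨this, LinearMap.injective_iff_surjective.mp this⟩
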